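/- Let F be a Banach space and α : B(F) → B(F) an endomorphism of the algebra of bounded operators of the form α(a) = T a S for fixed T, S ∈ B(F). Then α is injective if and only if S T = 1. -/
import Mathlib


/-- An inner endomorphism `α(a) = T a S` of `B(F)` is injective iff
`S T = 1`. -/
theorem stmt2 {F : Type*} [NormedAddCommGroup F] [NormedSpace ℂ F]
    (T S : F →L[ℂ] F)
    (hmul : ∀ a b : F →L[ℂ] F, T * (a * b) * S = (T * a * S) * (T * b * S)) :
    Function.Injective (fun a : F →L[ℂ] F => T * a * S) ↔ S * T = 1 := by
  constructor
  · intro hinj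
    apply hinj
    have h := hmul 1 1
    simp only [mul_one, one_mul] at h
    show T * (S * T) * S = T * 1 * S
    rw [mul_one]
    calc T * (S * T) * S = (T * S) * (T * S) := by noncomm_ring
      _ = T * S := h.symm
  · intro h a b hab
    have hab' : T * a * S = T * b * S := hab
    have : S * (T * a * S) * T = S * (T * b * S) * T := by rw [hab']
    calc a = (S * T) * a * (S * T) := by rw [h]; noncomm_ring
      _ = S * (T * a * S) * T := by noncomm_ring
      _ = S * (T * b * S) * T := this
      _ = (S * T) * b * (S * T) := by noncomm_ring
      _ = b := by rw [h]; noncomm_ring
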